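/- arXiv:1604.05351 — 2 statements merged into one kernel-verified Lean document; each statement's English description precedes it below -/
import Mathlib

section
/- Let Δₙ be a regular simplex in ℝⁿ with vertices v₁,…,v_{n+1} and centroid at 0. For 1 ≤ l ≤ n−1, let E_l = span(v₁,…,v_l) and f_{l+1} = (∑_{k=l+1}^{n+1} v_k)/(n+1−l) = −(∑_{k=1}^{l} v_k)/(n+1−l). Then the l-dimensional volume ratio |Δₙ ∩ E_l ∩ {x : ⟨f_{l+1},x⟩ ≥ 0}| / |Δₙ ∩ E_l| = (l/(n+1))^l, and consequently |Δₙ ∩ E_l ∩ f_{l+1}⁻| / |Δₙ ∩ E_l ∩ f_{l+1}⁺| = ((n+1)/l)^l − 1. -/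
open MeasureTheory Set
open scoped RealInnerProductSpace NNReal ENNReal



lemma sum_filter_lt_eq {M : Type*} [AddCommMonoid M] {n l : ℕ} (hl : l ≤ n + 1)
    (g : Fin (n + 1) → M) :
    ∑ k ∈ Finset.univ.filter (fun k : Fin (n + 1) => (k : ℕ) < l), g k
      = ∑ i : Fin l, g (Fin.castLE hl i) := by
  have hset : Finset.univ.filter (fun k : Fin (n + 1) => (k : ℕ) < l)
      = Finset.univ.map (Fin.castLEEmb hl) := by
    ext k
    simp only [Finset.mem_map, Finset.mem_filter, Finset.mem_univ, true_and]
    constructor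
    · intro hk
      exact ⟨⟨k, hk⟩, by ext; simp⟩
    · rintro ⟨i, rfl⟩
      simpa using i.isLt
  rw [hset, Finset.sum_map]
  rfl

-- weights constant lemma
lemma weights_const {n : ℕ} {V : Type*} [AddCommGroup V] [Module ℝ V]
    {v : Fin (n + 1) → V} (haff : AffineIndependent ℝ v) (hcent : ∑ i, v i = 0)
    (w : Fin (n + 1) → ℝ) (hw : ∑ i, w i • v i = 0) :
    ∀ i j, w i = w j := by
  set μ : ℝ := (∑ i, w i) / (n + 1) with hμ
  have hnn : ((n : ℝ) + 1) ≠ 0 := by positivity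
  have h1 : ∑ i : Fin (n + 1), (w i - μ) = 0 := by
    rw [Finset.sum_sub_distrib, Finset.sum_const, Finset.card_univ, Fintype.card_fin]
    rw [nsmul_eq_mul, hμ]
    push_cast
    field_simp
    ring
  have h2 : ∑ i : Fin (n + 1), (w i - μ) • v i = 0 := by
    simp only [sub_smul, Finset.sum_sub_distrib, hw, ← Finset.smul_sum, hcent, smul_zero,
      sub_zero]
  have h3 := affineIndependent_iff.1 haff Finset.univ (fun i => w i - μ) h1 h2
  intro i j
  have hi := h3 i (Finset.mem_univ i)
  have hj := h3 j (Finset.mem_univ j)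
  linarith


lemma regular_inner {n : ℕ} (hn : 2 ≤ n) (v : Fin (n + 1) → EuclideanSpace ℝ (Fin n))
    (haff : AffineIndependent ℝ v) (hcent : ∑ i, v i = 0)
    (hreg : ∃ d : ℝ, ∀ i j, i ≠ j → dist (v i) (v j) = d) :
    ∃ a : ℝ, a < 0 ∧ (∀ i, ⟪v i, v i⟫ = -(n : ℝ) * a) ∧ ∀ i j, i ≠ j → ⟪v i, v j⟫ = a := by
  obtain ⟨d, hd⟩ := hreg
  have hrow : ∀ i, ∑ j, ⟪v i, v j⟫ = 0 := by
    intro i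
    rw [← inner_sum, hcent, inner_zero_right]
  set S : ℝ := ∑ j, ‖v j‖ ^ 2 with hS
  have hnorm : ∀ i j, i ≠ j → ‖v i‖ ^ 2 - 2 * ⟪v i, v j⟫ + ‖v j‖ ^ 2 = d ^ 2 := by
    intro i j hij
    rw [← norm_sub_sq_real, ← dist_eq_norm, hd i j hij]
  have hc : ∀ i, ((n : ℝ) + 1) * ‖v i‖ ^ 2 + S = n * d ^ 2 := by
    intro i
    have h1 : ∑ j, ‖v i - v j‖ ^ 2 = (n : ℝ) * d ^ 2 := by
      rw [← Finset.add_sum_erase _ _ (Finset.mem_univ i)]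
      rw [Finset.sum_congr rfl (fun j hj => by
        rw [← dist_eq_norm, hd i j (Ne.symm (Finset.ne_of_mem_erase hj))])]
      rw [Finset.sum_const, Finset.card_erase_of_mem (Finset.mem_univ i), Finset.card_univ,
        Fintype.card_fin]
      simp [sub_self, nsmul_eq_mul]
    have h2 : ∀ j, ‖v i - v j‖ ^ 2 = ‖v i‖ ^ 2 - 2 * ⟪v i, v j⟫ + ‖v j‖ ^ 2 := fun j =>
      norm_sub_sq_real _ _
    rw [Finset.sum_congr rfl (fun j _ => h2 j)] at h1
    simp only [Finset.sum_add_distrib, Finset.sum_sub_distrib, ← Finset.mul_sum, hrow i,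
      Finset.sum_const, Finset.card_univ, Fintype.card_fin, nsmul_eq_mul] at h1
    push_cast at h1 ⊢
    linarith [h1]
  have hceq : ∀ i j, ‖v i‖ ^ 2 = ‖v j‖ ^ 2 := by
    intro i j
    have := hc i; have := hc j
    have hn1 : (0:ℝ) < (n : ℝ) + 1 := by positivity
    nlinarith
  set a : ℝ := ‖v 0‖ ^ 2 - d ^ 2 / 2 with ha
  have hoff : ∀ i j, i ≠ j → ⟪v i, v j⟫ = a := by
    intro i j hij
    have h1 := hnorm i j hij
    have h2 := hceq i 0
    have h3 := hceq j 0
    rw [ha]; linarith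
  have hdiag0 : ∀ i, ⟪v i, v i⟫ = ‖v 0‖ ^ 2 := by
    intro i
    rw [real_inner_self_eq_norm_sq]
    exact hceq i 0
  have hrel : ‖v 0‖ ^ 2 + (n : ℝ) * a = 0 := by
    have h1 := hrow 0
    rw [← Finset.add_sum_erase _ _ (Finset.mem_univ 0)] at h1
    rw [Finset.sum_congr rfl (fun j hj =>
      hoff 0 j (Ne.symm (Finset.ne_of_mem_erase hj)))] at h1
    rw [Finset.sum_const, Finset.card_erase_of_mem (Finset.mem_univ 0), Finset.card_univ,
      Fintype.card_fin, hdiag0 0, nsmul_eq_mul] at h1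
    push_cast at h1
    linarith
  have hc0 : 0 < ‖v 0‖ ^ 2 := by
    rcases lt_or_eq_of_le (sq_nonneg ‖v 0‖) with h | h
    · exact h
    · exfalso
      have hz : ∀ i, v i = 0 := by
        intro i
        have : ‖v i‖ ^ 2 = 0 := by rw [hceq i 0, ← h]
        simpa using this
      have h01 : (0 : Fin (n + 1)) ≠ 1 := by
        have : (1 : ℕ) < n + 1 := by omega
        exact fun hq => by simpa [Fin.ext_iff, Nat.mod_eq_of_lt this] using hq
      exact h01 (haff.injective (by rw [hz 0, hz 1]))
  have haneg : a < 0 := by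
    have hn0 : (0:ℝ) < n := by positivity
    nlinarith
  refine ⟨a, haneg, fun i => ?_, hoff⟩
  rw [hdiag0 i]; linarith


lemma aux_hausdorff_pi (k : ℕ) : (μH[(k:ℝ)] : Measure (Fin k → ℝ)) = volume := by
  have := MeasureTheory.hausdorffMeasure_pi_real (ι := Fin k)
  simpa [Fintype.card_fin] using this

lemma aux_fin_ball (k : ℕ) (R : ℝ) :
    μH[(k:ℝ)] (Metric.closedBall (0 : EuclideanSpace ℝ (Fin k)) R) ≠ ⊤ := by
  have hlip : AntilipschitzWith _ (WithLp.equiv 2 (Fin k → ℝ)) :=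
    PiLp.antilipschitzWith_ofLp 2 (fun _ : Fin k => ℝ)
  have h1 := hlip.le_hausdorffMeasure_image (by positivity : (0:ℝ) ≤ (k:ℝ))
    (Metric.closedBall 0 R)
  have h2 : (WithLp.equiv 2 (Fin k → ℝ)) '' (Metric.closedBall 0 R)
      ⊆ Metric.closedBall (0 : Fin k → ℝ) R := by
    rintro x ⟨y, hy, rfl⟩
    rw [Metric.mem_closedBall] at hy ⊢
    have hl := (PiLp.lipschitzWith_ofLp 2 (fun _ : Fin k => ℝ)).dist_le_mul y 0
    simpa using le_trans (by simpa using hl) hy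
  have h3 : μH[(k:ℝ)] ((WithLp.equiv 2 (Fin k → ℝ)) '' (Metric.closedBall 0 R))
      ≤ volume (Metric.closedBall (0 : Fin k → ℝ) R) := by
    rw [← aux_hausdorff_pi]
    exact measure_mono h2
  have h4 : volume (Metric.closedBall (0 : Fin k → ℝ) R) < ⊤ :=
    measure_closedBall_lt_top
  refine ne_top_of_le_ne_top ?_ h1
  exact ENNReal.mul_ne_top
    (ENNReal.rpow_lt_top_of_nonneg (by positivity) ENNReal.coe_ne_top).ne
    (lt_of_le_of_lt h3 h4).ne

lemma aux_pos {k : ℕ} {U : Set (EuclideanSpace ℝ (Fin k))} (hU : IsOpen U) (hne : U.Nonempty) :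
    μH[(k:ℝ)] U ≠ 0 := by
  have hlip : LipschitzWith 1 (WithLp.equiv 2 (Fin k → ℝ)) :=
    PiLp.lipschitzWith_ofLp 2 (fun _ : Fin k => ℝ)
  have h1 := hlip.hausdorffMeasure_image_le (by positivity : (0:ℝ) ≤ (k:ℝ)) U
  have himg : IsOpen ((WithLp.equiv 2 (Fin k → ℝ)) '' U) := by
    have heq : (WithLp.equiv 2 (Fin k → ℝ)) '' U
        = (PiLp.continuousLinearEquiv 2 ℝ (fun _ : Fin k => ℝ)) '' U := rfl
    rw [heq]
    exact (PiLp.continuousLinearEquiv 2 ℝ (fun _ : Fin k => ℝ)).toHomeomorph.isOpen_image.2 hU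
  have hvol : 0 < volume ((WithLp.equiv 2 (Fin k → ℝ)) '' U) :=
    himg.measure_pos _ (hne.image _)
  rw [← aux_hausdorff_pi] at hvol
  intro h0
  rw [h0, mul_zero] at h1
  simp only [le_zero_iff] at h1
  rw [h1] at hvol
  exact lt_irrefl _ hvol

lemma aux_null {k : ℕ} (V : Submodule ℝ (EuclideanSpace ℝ (Fin k))) (hV : V ≠ ⊤) :
    μH[(k:ℝ)] (V : Set (EuclideanSpace ℝ (Fin k))) = 0 := by
  obtain ⟨x, hx⟩ : ∃ x, x ∉ V := by
    by_contra h
    push_neg at h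
    exact hV (Submodule.eq_top_iff'.2 h)
  set e := WithLp.linearEquiv 2 ℝ (Fin k → ℝ)
  set W : Submodule ℝ (Fin k → ℝ) := V.map (e : EuclideanSpace ℝ (Fin k) →ₗ[ℝ] (Fin k → ℝ))
    with hWdef
  have hW : W ≠ ⊤ := by
    intro htop
    apply hx
    have hmem : e x ∈ W := htop ▸ Submodule.mem_top
    obtain ⟨y, hy, hxy⟩ := hmem
    have hyx : y = x := e.injective hxy
    rwa [← hyx]
  have h1 := (show AntilipschitzWith _ (WithLp.equiv 2 (Fin k → ℝ)) from
    PiLp.antilipschitzWith_ofLp 2 (fun _ : Fin k => ℝ)).le_hausdorffMeasure_image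
    (by positivity : (0:ℝ) ≤ (k:ℝ)) (V : Set (EuclideanSpace ℝ (Fin k)))
  have h2 : (WithLp.equiv 2 (Fin k → ℝ)) '' (V : Set (EuclideanSpace ℝ (Fin k)))
      ⊆ (W : Set (Fin k → ℝ)) := by
    rintro _ ⟨y, hy, rfl⟩
    exact ⟨y, hy, rfl⟩
  have h3 : μH[(k:ℝ)] ((WithLp.equiv 2 (Fin k → ℝ)) '' (V : Set (EuclideanSpace ℝ (Fin k)))) = 0 := by
    refine le_antisymm ?_ zero_le
    refine le_trans (measure_mono h2) ?_
    rw [aux_hausdorff_pi]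
    exact le_of_eq (Measure.addHaar_submodule volume W hW)
  rw [h3, mul_zero] at h1
  exact le_antisymm h1 zero_le


lemma sum_ite_eq_card {l : ℕ} (j : Fin l) (X Y : ℝ) :
    ∑ i : Fin l, (if i = j then X else Y) = X + ((l : ℝ) - 1) * Y := by
  rw [← Finset.add_sum_erase _ _ (Finset.mem_univ j)]
  rw [if_pos rfl]
  congr 1
  rw [Finset.sum_congr rfl (fun i hi => if_neg (Finset.ne_of_mem_erase hi))]
  rw [Finset.sum_const, Finset.card_erase_of_mem (Finset.mem_univ j), Finset.card_univ,
    Fintype.card_fin, nsmul_eq_mul]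
  have hl : 1 ≤ l := j.pos
  rw [Nat.cast_sub hl]
  push_cast
  ring

set_option maxHeartbeats 2000000 in
/-- For a regular simplex `Δₙ = conv(v₁,…,v_{n+1})` in `ℝⁿ` with centroid `0`,
`E_l = span(v₁,…,v_l)` and `f_{l+1} = -(∑_{i≤l} v_i)/(n+1-l)`, the `l`-dimensional
volume ratios satisfy `|Δₙ ∩ E_l ∩ f_{l+1}⁺|/|Δₙ ∩ E_l| = (l/(n+1))^l` and
`|Δₙ ∩ E_l ∩ f_{l+1}⁻|/|Δₙ ∩ E_l ∩ f_{l+1}⁺| = ((n+1)/l)^l - 1`. -/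
theorem simplex_section_ratio (n l : ℕ) (hn : 2 ≤ n) (hl1 : 1 ≤ l) (hl2 : l ≤ n - 1)
    (v : Fin (n + 1) → EuclideanSpace ℝ (Fin n))
    (haff : AffineIndependent ℝ v) (hcent : ∑ i, v i = 0)
    (hreg : ∃ d : ℝ, ∀ i j, i ≠ j → dist (v i) (v j) = d) :
    letI Δ : Set (EuclideanSpace ℝ (Fin n)) := convexHull ℝ (Set.range v)
    letI E : Set (EuclideanSpace ℝ (Fin n)) :=
      (Submodule.span ℝ (v '' {i | (i : ℕ) < l}) : Set (EuclideanSpace ℝ (Fin n)))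
    letI f : EuclideanSpace ℝ (Fin n) :=
      (-(((n : ℝ) + 1 - l)⁻¹)) • ∑ i ∈ Finset.univ.filter (fun i : Fin (n + 1) => (i : ℕ) < l), v i
    ((μH[(l : ℝ)] (Δ ∩ E ∩ {x | 0 ≤ ⟪f, x⟫})).toReal / (μH[(l : ℝ)] (Δ ∩ E)).toReal
        = ((l : ℝ) / (n + 1)) ^ l) ∧
      ((μH[(l : ℝ)] (Δ ∩ E ∩ {x | ⟪f, x⟫ ≤ 0})).toReal /
          (μH[(l : ℝ)] (Δ ∩ E ∩ {x | 0 ≤ ⟪f, x⟫})).toReal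
        = (((n : ℝ) + 1) / l) ^ l - 1) := by
  set Δ : Set (EuclideanSpace ℝ (Fin n)) := convexHull ℝ (Set.range v) with hΔdef
  set E : Set (EuclideanSpace ℝ (Fin n)) :=
    (Submodule.span ℝ (v '' {i | (i : ℕ) < l}) : Set (EuclideanSpace ℝ (Fin n))) with hEdef
  set f : EuclideanSpace ℝ (Fin n) :=
    (-(((n : ℝ) + 1 - l)⁻¹)) • ∑ i ∈ Finset.univ.filter (fun i : Fin (n + 1) => (i : ℕ) < l), v i
    with hfdef0
  have hln : l < n := by omega
  have hle : l ≤ n + 1 := by omega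
  have hl0 : (0 : ℝ) < l := by exact_mod_cast hl1
  have hn1 : (0 : ℝ) < (n : ℝ) + 1 := by positivity
  have hlr : (l : ℝ) < (n : ℝ) := by exact_mod_cast hln
  set e : Fin l → Fin (n + 1) := Fin.castLE hle with hedef
  set I : Finset (Fin (n + 1)) := Finset.univ.filter (fun i : Fin (n + 1) => (i : ℕ) < l)
    with hIdef
  set mr : ℝ := (n : ℝ) + 1 - l with hmrdef
  have hmr0 : 0 < mr := by rw [hmrdef]; linarith
  have hmr1 : 1 ≤ mr := by
    have h1 : l + 1 ≤ n := by omega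
    have h2 : (l : ℝ) + 1 ≤ n := by exact_mod_cast h1
    rw [hmrdef]; linarith
  have hfdef : f = (-(mr⁻¹)) • ∑ i ∈ I, v i := rfl
  have hvsum : ∑ i ∈ I, v i
      + ∑ i ∈ Finset.univ.filter (fun i : Fin (n + 1) => ¬ (i : ℕ) < l), v i = 0 := by
    rw [hIdef, Finset.sum_filter_add_sum_filter_not]; exact hcent
  have hcard : I.card = l := by
    have h := sum_filter_lt_eq (M := ℕ) hle (fun _ => 1)
    simpa [← Finset.card_eq_sum_ones, hIdef] using h
  have hcardnot : (Finset.univ.filter (fun i : Fin (n + 1) => ¬ (i : ℕ) < l)).card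
      = n + 1 - l := by
    have h := Finset.card_filter_add_card_filter_not
      (s := (Finset.univ : Finset (Fin (n + 1)))) (p := fun i : Fin (n + 1) => (i : ℕ) < l)
    rw [Finset.card_univ, Fintype.card_fin] at h
    rw [hIdef] at hcard
    omega
  have hcastnot : ((n + 1 - l : ℕ) : ℝ) = mr := by
    rw [Nat.cast_sub hle, hmrdef]; push_cast; ring
  obtain ⟨a, haneg, hdiag, hoff⟩ := regular_inner hn v haff hcent hreg
  have hemem : ∀ i : Fin l, e i ∈ I := fun i => by
    rw [hIdef]; exact Finset.mem_filter.2 ⟨Finset.mem_univ _, i.isLt⟩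
  have hgenmem : ∀ k ∈ I, v k ∈ Submodule.span ℝ (v '' {i : Fin (n + 1) | (i : ℕ) < l}) := by
    intro k hk
    exact Submodule.subset_span ⟨k, by simpa [hIdef] using hk, rfl⟩
  have hfmem : f ∈ Submodule.span ℝ (v '' {i : Fin (n + 1) | (i : ℕ) < l}) := by
    rw [hfdef]; exact Submodule.smul_mem _ _ (Submodule.sum_mem _ hgenmem)
  -- the fundamental representation of Δ ∩ E
  have hnotsum : ∑ k ∈ Finset.univ.filter (fun i : Fin (n + 1) => ¬ (i : ℕ) < l), v k
      = - ∑ i ∈ I, v i := by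
    have h := hvsum
    rw [add_comm] at h
    exact eq_neg_of_add_eq_zero_left h
  have himg : v '' {i : Fin (n + 1) | (i : ℕ) < l} = Set.range (fun i : Fin l => v (e i)) := by
    ext y
    constructor
    · rintro ⟨i, hi, rfl⟩
      exact ⟨⟨(i : ℕ), hi⟩, rfl⟩
    · rintro ⟨i, rfl⟩
      exact ⟨e i, by simpa [hedef] using i.isLt, rfl⟩
  have hSrep : ∀ x, x ∈ Δ ∩ E ↔ ∃ (t : Fin l → ℝ) (s : ℝ), (∀ i, 0 ≤ t i) ∧ 0 ≤ s ∧
      (∑ i, t i) + s = 1 ∧ x = (∑ i, t i • v (e i)) + s • f := by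
    intro x
    constructor
    · rintro ⟨hxΔ, hxE⟩
      rw [hΔdef, convexHull_range_eq_exists_affineCombination] at hxΔ
      obtain ⟨sf, w, hw0, hw1, hwx⟩ := hxΔ
      set W : Fin (n + 1) → ℝ := Set.indicator ↑sf w with hWdef
      have hW1 : ∑ i, W i = 1 := by
        rw [hWdef, Finset.sum_indicator_subset w (Finset.subset_univ sf)]
        exact hw1
      have hW0 : ∀ i, 0 ≤ W i := by
        intro i
        rw [hWdef, Set.indicator_apply]
        split
        · next h => exact hw0 i (by simpa using h)
        · exact le_refl 0
      have hWx : ∑ i, W i • v i = x := by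
        rw [← Finset.affineCombination_eq_linear_combination Finset.univ v W hW1, hWdef,
          ← Finset.affineCombination_indicator_subset w v (Finset.subset_univ sf)]
        exact hwx
      have hxE' : ∃ cc : Fin l → ℝ, ∑ i, cc i • v (e i) = x := by
        have hx2 : x ∈ Submodule.span ℝ (Set.range fun i : Fin l => v (e i)) := by
          rw [← himg]
          exact hxE
        exact (Submodule.mem_span_range_iff_exists_fun ℝ).1 hx2
      obtain ⟨cc, hccx⟩ := hxE'
      set w' : Fin (n + 1) → ℝ := fun k => W k - (if h : (k : ℕ) < l then cc ⟨k, h⟩ else 0)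
        with hw'def
      have hw'sum : ∑ k, w' k • v k = 0 := by
        have hd : ∑ k : Fin (n + 1), (if h : (k : ℕ) < l then cc ⟨k, h⟩ else 0) • v k
            = ∑ i : Fin l, cc i • v (e i) := by
          rw [← Finset.sum_subset (Finset.subset_univ I) (fun k _ hk => by
            rw [dif_neg (by simpa [hIdef] using hk), zero_smul])]
          rw [hIdef, sum_filter_lt_eq hle]
          refine Finset.sum_congr rfl fun i _ => ?_
          exact congrArg (fun z => z • v (Fin.castLE hle i)) (dif_pos i.isLt)
        simp only [hw'def, sub_smul, Finset.sum_sub_distrib, hWx, hd, hccx, sub_self]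
      have hconst := weights_const haff hcent w' hw'sum
      have hlastnot : ¬ ((Fin.last n : Fin (n + 1)) : ℕ) < l := by
        simp only [Fin.val_last]; omega
      have hWk : ∀ k : Fin (n + 1), ¬ ((k : ℕ) < l) → W k = W (Fin.last n) := by
        intro k hk
        have h := hconst k (Fin.last n)
        simp only [hw'def, dif_neg hk, dif_neg hlastnot, sub_zero] at h
        exact h
      refine ⟨fun i => W (e i), W (Fin.last n) * mr, fun i => hW0 _,
        mul_nonneg (hW0 _) hmr0.le, ?_, ?_⟩
      · have hsplit := Finset.sum_filter_add_sum_filter_not Finset.univ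
          (fun i : Fin (n + 1) => (i : ℕ) < l) W
        have h2 : ∑ k ∈ Finset.univ.filter (fun i : Fin (n + 1) => ¬ (i : ℕ) < l), W k
            = W (Fin.last n) * mr := by
          have hcongr : ∑ k ∈ Finset.univ.filter (fun i : Fin (n + 1) => ¬ (i : ℕ) < l), W k
              = ∑ _k ∈ Finset.univ.filter (fun i : Fin (n + 1) => ¬ (i : ℕ) < l),
                W (Fin.last n) :=
            Finset.sum_congr rfl (fun k hk => hWk k (Finset.mem_filter.1 hk).2)
          rw [hcongr, Finset.sum_const, hcardnot, nsmul_eq_mul, hcastnot]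
          ring
        have h3 : ∑ k ∈ Finset.univ.filter (fun i : Fin (n + 1) => (i : ℕ) < l), W k
            = ∑ i, W (e i) := by
          rw [sum_filter_lt_eq hle, hedef]
        rw [← h3, ← h2, hsplit]
        exact hW1
      · rw [← hWx, ← Finset.sum_filter_add_sum_filter_not Finset.univ
          (fun i : Fin (n + 1) => (i : ℕ) < l) (fun i => W i • v i)]
        congr 1
        · rw [sum_filter_lt_eq hle, hedef]
        · have hcongr : ∑ k ∈ Finset.univ.filter (fun i : Fin (n + 1) => ¬ (i : ℕ) < l),
              W k • v k
              = ∑ k ∈ Finset.univ.filter (fun i : Fin (n + 1) => ¬ (i : ℕ) < l),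
                W (Fin.last n) • v k :=
            Finset.sum_congr rfl (fun k hk => by rw [hWk k (Finset.mem_filter.1 hk).2])
          rw [hcongr, ← Finset.smul_sum, hnotsum, hfdef, smul_smul, smul_neg, ← neg_smul]
          congr 1
          field_simp
    · rintro ⟨t, s, ht0, hs0, hsum, rfl⟩
      constructor
      · rw [hΔdef, convexHull_range_eq_exists_affineCombination]
        set W : Fin (n + 1) → ℝ := fun k => if h : (k : ℕ) < l then t ⟨k, h⟩ else s / mr
          with hWdef
        have hWI : ∑ k ∈ Finset.univ.filter (fun i : Fin (n + 1) => (i : ℕ) < l), W k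
            = ∑ i, t i := by
          rw [sum_filter_lt_eq hle]
          refine Finset.sum_congr rfl fun i _ => ?_
          exact dif_pos i.isLt
        have hWnot : ∑ k ∈ Finset.univ.filter (fun i : Fin (n + 1) => ¬ (i : ℕ) < l), W k
            = s := by
          have hcongr : ∑ k ∈ Finset.univ.filter (fun i : Fin (n + 1) => ¬ (i : ℕ) < l), W k
              = ∑ _k ∈ Finset.univ.filter (fun i : Fin (n + 1) => ¬ (i : ℕ) < l), s / mr :=
            Finset.sum_congr rfl (fun k hk => dif_neg (Finset.mem_filter.1 hk).2)
          rw [hcongr, Finset.sum_const, hcardnot, nsmul_eq_mul, hcastnot]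
          field_simp
        have hW1 : ∑ k, W k = 1 := by
          rw [← Finset.sum_filter_add_sum_filter_not Finset.univ
            (fun i : Fin (n + 1) => (i : ℕ) < l) W, hWI, hWnot]
          exact hsum
        refine ⟨Finset.univ, W, fun i _ => ?_, hW1, ?_⟩
        · rw [hWdef]
          dsimp only
          split
          · exact ht0 _
          · exact div_nonneg hs0 hmr0.le
        · rw [Finset.affineCombination_eq_linear_combination Finset.univ v W hW1]
          rw [← Finset.sum_filter_add_sum_filter_not Finset.univ
            (fun i : Fin (n + 1) => (i : ℕ) < l) (fun k => W k • v k)]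
          congr 1
          · rw [sum_filter_lt_eq hle]
            refine Finset.sum_congr rfl fun i _ => ?_
            exact congrArg (fun z => z • v (Fin.castLE hle i)) (dif_pos i.isLt)
          · have hcongr : ∑ k ∈ Finset.univ.filter (fun i : Fin (n + 1) => ¬ (i : ℕ) < l),
                W k • v k
                = ∑ k ∈ Finset.univ.filter (fun i : Fin (n + 1) => ¬ (i : ℕ) < l),
                  (s / mr) • v k :=
              Finset.sum_congr rfl (fun k hk => by
                rw [show W k = s / mr from dif_neg (Finset.mem_filter.1 hk).2])
            rw [hcongr, ← Finset.smul_sum, hnotsum, hfdef, smul_smul, smul_neg, ← neg_smul]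
            congr 1
            field_simp
      · have hm : (∑ i, t i • v (e i)) + s • f
            ∈ Submodule.span ℝ (v '' {i : Fin (n + 1) | (i : ℕ) < l}) := by
          refine Submodule.add_mem _ (Submodule.sum_mem _ fun i _ => Submodule.smul_mem _ _ ?_)
            (Submodule.smul_mem _ _ hfmem)
          exact Submodule.subset_span ⟨e i, by simpa [hedef] using i.isLt, rfl⟩
        exact hm
  -- inner products with f
  have hfv : ∀ j : Fin l, ⟪f, v (e j)⟫ = a := by
    intro j
    have h1 : ⟪f, v (e j)⟫ = (-(mr⁻¹)) * ∑ k ∈ I, ⟪v k, v (e j)⟫ := by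
      rw [hfdef, real_inner_smul_left, sum_inner]
    rw [h1, hIdef, sum_filter_lt_eq hle (fun k => ⟪v k, v (e j)⟫)]
    have h2 : ∀ i : Fin l, ⟪v (Fin.castLE hle i), v (e j)⟫ = if i = j then -(n : ℝ) * a else a := by
      intro i
      by_cases h : i = j
      · rw [if_pos h, h, hedef, hdiag]
      · rw [if_neg h]
        exact hoff _ _ (by rw [hedef]; exact fun hc => h (Fin.castLE_injective hle hc))
    rw [Finset.sum_congr rfl (fun i _ => h2 i), sum_ite_eq_card j]
    have : -(n : ℝ) * a + ((l : ℝ) - 1) * a = -mr * a := by rw [hmrdef]; ring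
    rw [this]
    field_simp
  have hff : ⟪f, f⟫ = -(l : ℝ) * a / mr := by
    have h1 : ⟪f, f⟫ = (-(mr⁻¹)) * ∑ k ∈ I, ⟪f, v k⟫ := by
      nth_rewrite 2 [hfdef]
      rw [real_inner_smul_right, inner_sum]
    rw [h1, hIdef, sum_filter_lt_eq hle (fun k => ⟪f, v k⟫)]
    rw [Finset.sum_congr rfl (fun i _ => hfv i), Finset.sum_const, Finset.card_univ,
      Fintype.card_fin, nsmul_eq_mul]
    field_simp
  have hinner : ∀ (t : Fin l → ℝ) (s : ℝ),
      ⟪f, (∑ i, t i • v (e i)) + s • f⟫ = a * ((∑ i, t i) - s * l / mr) := by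
    intro t s
    rw [inner_add_right, inner_sum, real_inner_smul_right, hff]
    rw [Finset.sum_congr rfl (fun i _ => by rw [real_inner_smul_right, hfv i])]
    rw [← Finset.sum_mul]
    field_simp
    ring
  -- the parameterizing linear map
  set L : EuclideanSpace ℝ (Fin l) →ₗ[ℝ] EuclideanSpace ℝ (Fin n) :=
    { toFun := fun w => ∑ i, w i • v (e i)
      map_add' := fun w₁ w₂ => by
        simp only [PiLp.add_apply, add_smul, Finset.sum_add_distrib]
      map_smul' := fun c w => by
        simp only [PiLp.smul_apply, smul_eq_mul, RingHom.id_apply, ← smul_smul, Finset.smul_sum] }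
    with hLdef
  have hLapp : ∀ w : EuclideanSpace ℝ (Fin l), L w = ∑ i, w i • v (e i) := fun _ => rfl
  have hlastnot : ¬ ((Fin.last n : Fin (n + 1)) : ℕ) < l := by
    simp only [Fin.val_last]; omega
  have hLker : LinearMap.ker L = ⊥ := by
    rw [LinearMap.ker_eq_bot']
    intro w hw
    rw [hLapp] at hw
    set w' : Fin (n + 1) → ℝ := fun k => if h : (k : ℕ) < l then w ⟨k, h⟩ else 0 with hw'def
    have hw'sum : ∑ k, w' k • v k = 0 := by
      rw [← Finset.sum_subset (Finset.subset_univ I) (fun k _ hk => by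
        rw [show w' k = 0 from dif_neg (by simpa [hIdef] using hk), zero_smul])]
      rw [hIdef, sum_filter_lt_eq hle (fun k => w' k • v k)]
      rw [show ∑ i : Fin l, w' (Fin.castLE hle i) • v (Fin.castLE hle i)
          = ∑ i : Fin l, w i • v (e i) from
        Finset.sum_congr rfl (fun i _ => congrArg (fun z => z • v (Fin.castLE hle i))
          (dif_pos i.isLt))]
      exact hw
    have hconst := weights_const haff hcent w' hw'sum
    have hz : ∀ k, w' k = 0 := fun k => by
      rw [hconst k (Fin.last n), hw'def]
      exact dif_neg hlastnot
    ext i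
    have h := hz (e i)
    rw [show w' (e i) = w i from dif_pos i.isLt] at h
    simpa using h
  obtain ⟨KA, hKA0, hKA⟩ := LinearMap.exists_antilipschitzWith L hLker
  have hLlip : LipschitzWith ‖LinearMap.toContinuousLinearMap L‖₊ L :=
    (LinearMap.toContinuousLinearMap L).lipschitz
  have hLrep : ∀ (t : Fin l → ℝ) (s : ℝ),
      (∑ i, t i • v (e i)) + s • f
        = L ((WithLp.equiv 2 (Fin l → ℝ)).symm (fun i => t i - s * mr⁻¹)) := by
    intro t s
    rw [hLapp, hfdef, hIdef, sum_filter_lt_eq hle v, ← hedef]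
    rw [smul_smul, Finset.smul_sum, ← Finset.sum_add_distrib]
    refine Finset.sum_congr rfl fun i _ => ?_
    rw [← add_smul]
    congr 1
    show t i + s * -mr⁻¹ = t i - s * mr⁻¹
    ring
  have hΔcomp : IsCompact Δ := (Set.finite_range v).isCompact_convexHull ℝ
  have hEclosed : IsClosed E :=
    (Submodule.span ℝ (v '' {i : Fin (n + 1) | (i : ℕ) < l})).closed_of_finiteDimensional
  have hScomp : IsCompact (Δ ∩ E) := hΔcomp.inter_right hEclosed
  have hld : (0 : ℝ) ≤ (l : ℝ) := by positivity
  have hl1' : (1 : ℝ) ≤ (l : ℝ) := by exact_mod_cast hl1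
  -- finiteness
  have hsubball : Δ ∩ E ⊆ L '' Metric.closedBall 0 (2 * l) := by
    intro x hx
    obtain ⟨t, s, ht0, hs0, hsum, rfl⟩ := (hSrep x).1 hx
    refine ⟨(WithLp.equiv 2 (Fin l → ℝ)).symm (fun i => t i - s * mr⁻¹), ?_, (hLrep t s).symm⟩
    rw [Metric.mem_closedBall, dist_zero_right]
    have htsum0 : 0 ≤ ∑ j, t j := Finset.sum_nonneg fun j _ => ht0 j
    have hti1 : ∀ i, t i ≤ 1 := by
      intro i
      have h1 : t i ≤ ∑ j, t j := Finset.single_le_sum (fun j _ => ht0 j) (Finset.mem_univ i)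
      linarith
    have hs1 : s ≤ 1 := by linarith
    have hinv1 : mr⁻¹ ≤ 1 := by
      rw [show (1:ℝ) = 1⁻¹ by norm_num]
      exact inv_anti₀ one_pos hmr1
    have hinv0 : 0 ≤ mr⁻¹ := by positivity
    have hsm0 : 0 ≤ s * mr⁻¹ := mul_nonneg hs0 hinv0
    have hsm1 : s * mr⁻¹ ≤ 1 := mul_le_one₀ hs1 hinv0 hinv1
    have hb : ∀ i : Fin l, |t i - s * mr⁻¹| ≤ 2 := by
      intro i
      rw [abs_le]
      constructor <;> linarith [ht0 i, hti1 i]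
    rw [EuclideanSpace.norm_eq]
    have h2 : ∑ i : Fin l,
        ‖((WithLp.equiv 2 (Fin l → ℝ)).symm (fun i => t i - s * mr⁻¹)) i‖ ^ 2
        ≤ (2 * l) ^ 2 := by
      have h3 : ∀ i : Fin l,
          ‖((WithLp.equiv 2 (Fin l → ℝ)).symm (fun i => t i - s * mr⁻¹)) i‖ ^ 2 ≤ 4 := by
        intro i
        rw [show ((WithLp.equiv 2 (Fin l → ℝ)).symm (fun i => t i - s * mr⁻¹)) i
          = t i - s * mr⁻¹ from rfl, Real.norm_eq_abs]
        nlinarith [hb i, abs_nonneg (t i - s * mr⁻¹)]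
      calc ∑ i : Fin l, ‖((WithLp.equiv 2 (Fin l → ℝ)).symm (fun i => t i - s * mr⁻¹)) i‖ ^ 2
          ≤ ∑ _i : Fin l, (4:ℝ) := Finset.sum_le_sum (fun i _ => h3 i)
        _ = 4 * l := by rw [Finset.sum_const, Finset.card_univ, Fintype.card_fin, nsmul_eq_mul]; ring
        _ ≤ (2 * l) ^ 2 := by nlinarith [hl1']
    calc Real.sqrt (∑ i : Fin l,
        ‖((WithLp.equiv 2 (Fin l → ℝ)).symm (fun i => t i - s * mr⁻¹)) i‖ ^ 2)
        ≤ Real.sqrt ((2 * l) ^ 2) := Real.sqrt_le_sqrt h2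
      _ = 2 * l := Real.sqrt_sq (by positivity)
  have hfinS : μH[(l : ℝ)] (Δ ∩ E) ≠ ⊤ := by
    have h1 := hLlip.hausdorffMeasure_image_le hld (Metric.closedBall 0 (2 * l))
    refine ne_top_of_le_ne_top ?_ (le_trans (measure_mono hsubball) h1)
    exact ENNReal.mul_ne_top (ENNReal.rpow_lt_top_of_nonneg hld ENNReal.coe_ne_top).ne
      (aux_fin_ball l (2 * l))
  -- positivity
  have hcoordle : ∀ w : EuclideanSpace ℝ (Fin l), ∀ i, |w i| ≤ ‖w‖ := by
    intro w i
    rw [EuclideanSpace.norm_eq, ← Real.sqrt_sq_eq_abs]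
    apply Real.sqrt_le_sqrt
    have h := Finset.single_le_sum (f := fun j => ‖w j‖ ^ 2)
      (fun j _ => by positivity) (Finset.mem_univ i)
    simpa [Real.norm_eq_abs, sq_abs] using h
  set ε : ℝ := ((n : ℝ) + 1 + l)⁻¹ with hεdef
  have hnl0 : (0:ℝ) < (n : ℝ) + 1 + l := by positivity
  have hε0 : 0 < ε := by rw [hεdef]; positivity
  have hballsub : L '' Metric.ball 0 ε ⊆ Δ ∩ E := by
    rintro _ ⟨w, hwball, rfl⟩
    rw [Metric.mem_ball, dist_zero_right] at hwball
    have hwc : ∀ i, |w i| ≤ ε := fun i => le_trans (hcoordle w i) hwball.le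
    have hsum_le : ∑ i, w i ≤ l * ε := by
      calc ∑ i, w i ≤ ∑ _i : Fin l, ε := Finset.sum_le_sum (fun i _ => (abs_le.1 (hwc i)).2)
        _ = l * ε := by rw [Finset.sum_const, Finset.card_univ, Fintype.card_fin, nsmul_eq_mul]
    have hlε : (l : ℝ) * ε < 1 := by
      rw [hεdef, ← div_eq_mul_inv]
      rw [div_lt_one hnl0]
      linarith
    have hkey : (1 : ℝ) - l * ε = ((n : ℝ) + 1) * ε := by
      rw [hεdef]
      field_simp
      ring
    apply (hSrep _).2
    refine ⟨fun i => w i + (1 - ∑ j, w j) / ((n : ℝ) + 1),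
      (1 - ∑ j, w j) * mr / ((n : ℝ) + 1), ?_, ?_, ?_, ?_⟩
    · intro i
      have h1 := (abs_le.1 (hwc i)).1
      have h2 : ε ≤ (1 - ∑ j, w j) / ((n : ℝ) + 1) := by
        rw [le_div_iff₀ hn1]
        linarith [hsum_le, hkey]
      linarith
    · have h1 : (0:ℝ) ≤ 1 - ∑ j, w j := by linarith [hsum_le, hlε]
      positivity
    · rw [Finset.sum_add_distrib, Finset.sum_const, Finset.card_univ, Fintype.card_fin,
        nsmul_eq_mul, hmrdef]
      field_simp
      ring
    · rw [hLrep (fun i => w i + (1 - ∑ j, w j) / ((n : ℝ) + 1))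
        ((1 - ∑ j, w j) * mr / ((n : ℝ) + 1))]
      congr 1
      ext i
      show w i = w i + (1 - ∑ j, w j) / ((n : ℝ) + 1)
        - (1 - ∑ j, w j) * mr / ((n : ℝ) + 1) * mr⁻¹
      field_simp
      ring
  have hposS : μH[(l : ℝ)] (Δ ∩ E) ≠ 0 := by
    intro h0
    have h1 := hKA.le_hausdorffMeasure_image hld (Metric.ball (0 : EuclideanSpace ℝ (Fin l)) ε)
    have h2 : μH[(l : ℝ)] (L '' Metric.ball 0 ε) = 0 := by
      refine le_antisymm ?_ zero_le
      rw [← h0]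
      exact measure_mono hballsub
    have h3 : μH[(l : ℝ)] (Metric.ball (0 : EuclideanSpace ℝ (Fin l)) ε) = 0 := by
      refine le_antisymm ?_ zero_le
      refine le_trans h1 ?_
      rw [h2, mul_zero]
    exact aux_pos Metric.isOpen_ball (Metric.nonempty_ball.2 hε0) h3
  -- the homothety
  set r : ℝ := (l : ℝ) / ((n : ℝ) + 1) with hrdef
  have hr0 : 0 < r := by rw [hrdef]; positivity
  have hr1 : r < 1 := by rw [hrdef, div_lt_one hn1]; linarith
  have hrl : r * ((n : ℝ) + 1) = l := by rw [hrdef]; field_simp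
  have hhom : ∀ x : EuclideanSpace ℝ (Fin n),
      AffineMap.homothety f r x = r • x + (1 - r) • f := by
    intro x
    simp [AffineMap.homothety_apply, vsub_eq_sub, vadd_eq_add, smul_sub, sub_smul, one_smul]
    module
  have hcanon : ∀ (t : Fin l → ℝ) (s : ℝ),
      AffineMap.homothety f r ((∑ i, t i • v (e i)) + s • f)
        = (∑ i, (r * t i) • v (e i)) + (r * s + 1 - r) • f := by
    intro t s
    rw [hhom, smul_add, Finset.smul_sum]
    rw [Finset.sum_congr rfl (fun i _ => smul_smul r (t i) (v (e i)))]
    rw [smul_smul, add_assoc, ← add_smul]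
    congr 2
    ring
  have hcap : Δ ∩ E ∩ {x | 0 ≤ ⟪f, x⟫} = AffineMap.homothety f r '' (Δ ∩ E) := by
    ext x
    constructor
    · rintro ⟨hxS, hxpos⟩
      obtain ⟨t, s, ht0, hs0, hsum, rfl⟩ := (hSrep x).1 hxS
      rw [Set.mem_setOf_eq, hinner t s] at hxpos
      have hdd : s * l / mr * mr = s * l := div_mul_cancel₀ _ hmr0.ne'
      have hQ : (∑ i, t i) - s * l / mr ≤ 0 := by
        by_contra hQ'
        push_neg at hQ'
        exact absurd hxpos (not_le.2 (mul_neg_of_neg_of_pos haneg hQ'))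
      have h7 : ∑ i, t i = 1 - s := by linarith
      rw [h7] at hQ
      have h8 : (1 - s) ≤ s * l / mr := by linarith
      have h10 := mul_le_mul_of_nonneg_right h8 hmr0.le
      rw [hdd] at h10
      have h9 : s * ((n : ℝ) + 1) = s * l + s * mr := by rw [hmrdef]; ring
      have hsge : mr / ((n : ℝ) + 1) ≤ s := by
        rw [div_le_iff₀ hn1]
        linarith [h10, h9]
      have h4 : 1 - r = mr / ((n : ℝ) + 1) := by rw [hrdef, hmrdef]; field_simp
      have h5 : 1 - s ≤ r := by linarith [hsge, h4]
      refine ⟨(∑ i, (t i / r) • v (e i)) + (1 - (1 - s) / r) • f, (hSrep _).2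
        ⟨fun i => t i / r, 1 - (1 - s) / r, fun i => div_nonneg (ht0 i) hr0.le, ?_, ?_, rfl⟩, ?_⟩
      · have h6 : (1 - s) / r ≤ 1 := by rw [div_le_one hr0]; exact h5
        linarith
      · rw [← Finset.sum_div, h7]
        field_simp
        ring
      · rw [hcanon]
        congr 1
        · refine Finset.sum_congr rfl fun i _ => ?_
          congr 1
          field_simp
        · congr 1
          field_simp
          ring
    · rintro ⟨y, hyS, rfl⟩
      obtain ⟨t, s, ht0, hs0, hsum, rfl⟩ := (hSrep y).1 hyS
      rw [hcanon]
      constructor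
      · refine (hSrep _).2 ⟨fun i => r * t i, r * s + 1 - r,
          fun i => mul_nonneg hr0.le (ht0 i), by nlinarith, ?_, rfl⟩
        rw [← Finset.mul_sum]
        nlinarith [hsum]
      · rw [Set.mem_setOf_eq, hinner]
        have hkey2 : (r * s + 1 - r) * l - r * ((∑ i, t i)) * mr = r * ((n : ℝ) + 1) * s := by
          have h7 : ∑ i, t i = 1 - s := by linarith
          rw [h7, hmrdef, ← hrl]
          ring
        have hQ : (∑ i, r * t i) - (r * s + 1 - r) * l / mr ≤ 0 := by
          rw [← Finset.mul_sum, sub_nonpos, le_div_iff₀ hmr0]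
          have hrs : 0 ≤ r * ((n : ℝ) + 1) * s := by positivity
          linarith [hkey2, hrs]
        have hmm := mul_nonneg (neg_nonneg.2 haneg.le) (neg_nonneg.2 hQ)
        linarith [hmm]
  -- the slice has measure zero
  have hfne : (l : ℝ) * a ≠ 0 := (mul_neg_of_pos_of_neg hl0 haneg).ne
  have hsliceN : μH[(l : ℝ)] ((Δ ∩ E) ∩ {x | ⟪f, x⟫ = 0}) = 0 := by
    set φ : EuclideanSpace ℝ (Fin l) →ₗ[ℝ] ℝ :=
      ((innerSL ℝ f).toLinearMap).comp L with hφdef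
    have hφapp : ∀ w, φ w = ⟪f, L w⟫ := fun _ => rfl
    set V : Submodule ℝ (EuclideanSpace ℝ (Fin l)) := LinearMap.ker φ with hVdef
    have hVne : V ≠ ⊤ := by
      intro htop
      have hmem : ((WithLp.equiv 2 (Fin l → ℝ)).symm (fun _ => 1)) ∈ V :=
        htop ▸ Submodule.mem_top
      have hzero : φ ((WithLp.equiv 2 (Fin l → ℝ)).symm (fun _ => 1)) = 0 := hmem
      have hval : φ ((WithLp.equiv 2 (Fin l → ℝ)).symm (fun _ => 1)) = (l : ℝ) * a := by
        rw [hφapp, hLapp, inner_sum]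
        rw [Finset.sum_congr rfl (fun i _ => by
          rw [show ((WithLp.equiv 2 (Fin l → ℝ)).symm (fun _ => (1:ℝ))) i = 1 from rfl,
            one_smul, hfv i])]
        rw [Finset.sum_const, Finset.card_univ, Fintype.card_fin, nsmul_eq_mul]
      exact hfne (by rw [← hval, hzero])
    have hsub : (Δ ∩ E) ∩ {x | ⟪f, x⟫ = 0} ⊆ L '' (V : Set (EuclideanSpace ℝ (Fin l))) := by
      rintro x ⟨hxS, hx0⟩
      obtain ⟨t, s, ht0, hs0, hsum, rfl⟩ := (hSrep x).1 hxS
      refine ⟨(WithLp.equiv 2 (Fin l → ℝ)).symm (fun i => t i - s * mr⁻¹), ?_, (hLrep t s).symm⟩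
      have : φ ((WithLp.equiv 2 (Fin l → ℝ)).symm (fun i => t i - s * mr⁻¹)) = 0 := by
        rw [hφapp, ← hLrep t s]
        exact hx0
      exact this
    refine le_antisymm ?_ zero_le
    refine le_trans (measure_mono hsub) ?_
    refine le_trans (hLlip.hausdorffMeasure_image_le hld (V : Set (EuclideanSpace ℝ (Fin l)))) ?_
    rw [aux_null V hVne, mul_zero]
  -- measurability, union, intersection
  have hmeas_bot : MeasurableSet (Δ ∩ E ∩ {x | ⟪f, x⟫ ≤ 0}) := by
    refine (IsClosed.inter hScomp.isClosed ?_).measurableSet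
    exact isClosed_le (continuous_const.inner continuous_id) continuous_const
  have hU : (Δ ∩ E ∩ {x | 0 ≤ ⟪f, x⟫}) ∪ (Δ ∩ E ∩ {x | ⟪f, x⟫ ≤ 0}) = Δ ∩ E := by
    ext x
    simp only [Set.mem_union, Set.mem_inter_iff, Set.mem_setOf_eq]
    constructor
    · rintro (⟨h, -⟩ | ⟨h, -⟩) <;> exact h
    · intro h
      rcases le_total 0 (⟪f, x⟫) with h' | h'
      exacts [Or.inl ⟨h, h'⟩, Or.inr ⟨h, h'⟩]
  have hI2 : (Δ ∩ E ∩ {x | 0 ≤ ⟪f, x⟫}) ∩ (Δ ∩ E ∩ {x | ⟪f, x⟫ ≤ 0})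
      = (Δ ∩ E) ∩ {x | ⟪f, x⟫ = 0} := by
    ext x
    simp only [Set.mem_inter_iff, Set.mem_setOf_eq]
    constructor
    · rintro ⟨⟨h1, h2⟩, ⟨-, h3⟩⟩
      exact ⟨h1, le_antisymm h3 h2⟩
    · rintro ⟨h1, h2⟩
      exact ⟨⟨h1, h2.symm.le⟩, ⟨h1, h2.le⟩⟩
  have hkey := measure_union_add_inter (μ := μH[(l : ℝ)])
    (Δ ∩ E ∩ {x | 0 ≤ ⟪f, x⟫}) hmeas_bot
  rw [hU, hI2, hsliceN, add_zero] at hkey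
  have hcapμ : μH[(l : ℝ)] (Δ ∩ E ∩ {x | 0 ≤ ⟪f, x⟫})
      = (‖r‖₊ ^ (l : ℝ)) • μH[(l : ℝ)] (Δ ∩ E) := by
    rw [hcap]
    exact hausdorffMeasure_homothety_image hld f hr0.ne' (Δ ∩ E)
  have hcoef : (((‖r‖₊ ^ (l : ℝ) : ℝ≥0)) : ℝ) = r ^ l := by
    rw [NNReal.coe_rpow, coe_nnnorm, Real.norm_eq_abs, abs_of_pos hr0, Real.rpow_natCast]
  have hAr : 0 < (μH[(l : ℝ)] (Δ ∩ E)).toReal := ENNReal.toReal_pos hposS hfinS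
  have hPr : (μH[(l : ℝ)] (Δ ∩ E ∩ {x | 0 ≤ ⟪f, x⟫})).toReal
      = r ^ l * (μH[(l : ℝ)] (Δ ∩ E)).toReal := by
    rw [hcapμ, ENNReal.smul_def, smul_eq_mul, ENNReal.toReal_mul, ENNReal.coe_toReal, hcoef]
  have hcapfin : μH[(l : ℝ)] (Δ ∩ E ∩ {x | 0 ≤ ⟪f, x⟫}) ≠ ⊤ :=
    ne_top_of_le_ne_top hfinS (measure_mono Set.inter_subset_left)
  have hbotfin : μH[(l : ℝ)] (Δ ∩ E ∩ {x | ⟪f, x⟫ ≤ 0}) ≠ ⊤ :=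
    ne_top_of_le_ne_top hfinS (measure_mono Set.inter_subset_left)
  have hBr : (μH[(l : ℝ)] (Δ ∩ E ∩ {x | ⟪f, x⟫ ≤ 0})).toReal
      = (μH[(l : ℝ)] (Δ ∩ E)).toReal
        - (μH[(l : ℝ)] (Δ ∩ E ∩ {x | 0 ≤ ⟪f, x⟫})).toReal := by
    rw [hkey, ENNReal.toReal_add hcapfin hbotfin]
    ring
  have hrl0 : (0 : ℝ) < r ^ l := by positivity
  constructor
  · rw [hPr, mul_div_assoc, div_self hAr.ne', mul_one]
  · rw [hBr, hPr]
    have hinvr : ((n : ℝ) + 1) / l = r⁻¹ := by rw [hrdef, inv_div]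
    rw [hinvr, inv_pow]
    field_simp
end

section
/- Let n = 2^m and K = [−1,1]ⁿ. There exist n pairwise orthogonal vertices f₁,…,f_n of a common facet of K such that, with C the closed convex cone generated by f₁,…,f_n, one has |K ∩ C| = n^{n/2}/n!. -/
open MeasureTheory
open scoped RealInnerProductSpace ENNReal

theorem aux_crosspoly (n : ℕ) (hn1 : 1 ≤ n) :
    volume {x : Fin n → ℝ | ∑ i, |x i| < 1}
      = ENNReal.ofReal (2 ^ n / (n.factorial : ℝ)) := by
  haveI : Nonempty (Fin n) := ⟨⟨0, hn1⟩⟩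
  have h := MeasureTheory.volume_sum_rpow_lt_one (Fin n) (le_refl (1:ℝ))
  simp only [Real.rpow_one, Fintype.card_fin, div_one] at h
  rw [h, Real.Gamma_nat_eq_factorial]
  norm_num [Real.Gamma_two]


noncomputable def chi {m : ℕ} (a b : Fin m → ZMod 2) : ℝ :=
  if ∑ k, a k * b k = 0 then 1 else -1

lemma chi_pm {m : ℕ} (a b : Fin m → ZMod 2) : chi a b = 1 ∨ chi a b = -1 := by
  unfold chi; split <;> simp

lemma chi_zero_right {m : ℕ} (a : Fin m → ZMod 2) : chi a 0 = 1 := by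
  simp [chi]

lemma zmod2_cases : ∀ x : ZMod 2, x ≠ 0 → x = 1 := by decide

lemma chi_mul {m : ℕ} (a b g : Fin m → ZMod 2) :
    chi a g * chi b g = chi (a + b) g := by
  unfold chi
  have hsum : ∑ k, (a + b) k * g k = (∑ k, a k * g k) + ∑ k, b k * g k := by
    rw [← Finset.sum_add_distrib]
    exact Finset.sum_congr rfl fun k _ => by simp [add_mul]
  rw [hsum]
  set u := ∑ k, a k * g k
  set v := ∑ k, b k * g k
  by_cases hu : u = 0 <;> by_cases hv : v = 0
  · simp [hu, hv]
  · simp [hu, hv]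
  · simp [hu, hv]
  · rw [zmod2_cases u hu, zmod2_cases v hv]
    have h2 : ((1:ZMod 2) + 1) = 0 := by decide
    rw [h2]
    norm_num
lemma sum_chi_eq_zero {m : ℕ} {c : Fin m → ZMod 2} (hc : c ≠ 0) :
    ∑ g : Fin m → ZMod 2, chi c g = 0 := by
  obtain ⟨k, hk⟩ := Function.ne_iff.mp hc
  classical
  have hk1 : c k = 1 := zmod2_cases _ hk
  have hflip : ∀ g, chi c (g + Pi.single k 1) = - chi c g := by
    intro g
    unfold chi
    have h1 : ∑ j, c j * (g + Pi.single k 1 : Fin m → ZMod 2) j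
        = (∑ j, c j * g j) + 1 := by
      have : ∀ j, c j * (g + Pi.single k 1 : Fin m → ZMod 2) j
          = c j * g j + c j * (Pi.single k 1 : Fin m → ZMod 2) j := by
        intro j; simp [mul_add]
      rw [Finset.sum_congr rfl fun j _ => this j, Finset.sum_add_distrib]
      congr 1
      rw [Finset.sum_eq_single k]
      · simp [hk1]
      · intro j _ hj; simp [Pi.single_eq_of_ne hj]
      · simp
    rw [h1]
    set u := ∑ j, c j * g j
    by_cases hu : u = 0
    · rw [if_pos hu, hu, if_neg (show ¬((0:ZMod 2)+1 = 0) by decide)]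
    · rw [if_neg hu, zmod2_cases u hu,
        if_pos (show ((1:ZMod 2)+1 = 0) by decide)]
      norm_num
  have hinv : ∑ g : Fin m → ZMod 2, chi c g
      = ∑ g : Fin m → ZMod 2, chi c (g + Pi.single k 1) :=
    (Equiv.sum_comp (Equiv.addRight (Pi.single k 1)) (chi c)).symm
  rw [Finset.sum_congr rfl (fun g _ => hflip g), Finset.sum_neg_distrib] at hinv
  linarith

noncomputable def sgn {n : ℕ} (ε : Fin n → Bool) (i : Fin n) : ℝ := if ε i then 1 else -1

noncomputable def sgnMap {n : ℕ} (ε : Fin n → Bool) : (Fin n → ℝ) →ₗ[ℝ] (Fin n → ℝ) :=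
  LinearMap.pi (fun i => sgn ε i • LinearMap.proj i)

lemma sgnMap_apply {n : ℕ} (ε : Fin n → Bool) (x : Fin n → ℝ) (i : Fin n) :
    sgnMap ε x i = sgn ε i * x i := rfl

lemma abs_sgn {n : ℕ} (ε : Fin n → Bool) (i : Fin n) : |sgn ε i| = 1 := by
  unfold sgn; split <;> norm_num

lemma det_sgnMap {n : ℕ} (ε : Fin n → Bool) :
    |LinearMap.det (sgnMap ε)| = 1 := by
  classical
  rw [← LinearMap.det_toMatrix (Pi.basisFun ℝ (Fin n))]
  have : LinearMap.toMatrix (Pi.basisFun ℝ (Fin n)) (Pi.basisFun ℝ (Fin n)) (sgnMap ε)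
      = Matrix.diagonal (sgn ε) := by
    ext i j
    rw [LinearMap.toMatrix_apply]
    simp only [Pi.basisFun_apply, Pi.basisFun_repr, sgnMap_apply, Matrix.diagonal]
    by_cases h : i = j
    · subst h; simp
    · simp [Pi.single_eq_of_ne (Ne.symm h), h]
  rw [this, Matrix.det_diagonal, Finset.abs_prod]
  simp [abs_sgn]

theorem volume_simplex (n : ℕ) (hn1 : 1 ≤ n) :
    volume {x : Fin n → ℝ | (∀ i, 0 ≤ x i) ∧ ∑ i, x i ≤ 1}
      = ENNReal.ofReal ((n.factorial : ℝ)⁻¹) := by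
  classical
  haveI : Nonempty (Fin n) := ⟨⟨0, hn1⟩⟩
  set S : (Fin n → Bool) → Set (Fin n → ℝ) := fun ε =>
    {x | ∀ i, if ε i then 0 < x i else x i < 0} ∩ {x | ∑ i, |x i| < 1} with hS
  have hSm : ∀ ε, MeasurableSet (S ε) := by
    intro ε
    apply MeasurableSet.inter
    · have : {x : Fin n → ℝ | ∀ i, if ε i then 0 < x i else x i < 0}
          = ⋂ i, (fun x : Fin n → ℝ => x i) ⁻¹' {t | if ε i then 0 < t else t < 0} := by
        ext x; simp [Set.mem_iInter]
      rw [this]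
      refine MeasurableSet.iInter fun i => MeasurableSet.preimage ?_ (measurable_pi_apply i)
      by_cases h : ε i
      · simp only [if_pos h]; exact measurableSet_Ioi
      · simp only [if_neg h]; exact measurableSet_Iio
    · exact measurableSet_lt (by fun_prop) measurable_const
  have hveq : ∀ ε, volume (S ε) = volume (S (fun _ => true)) := by
    intro ε
    have hdet : LinearMap.det (sgnMap ε) ≠ 0 := by
      intro h
      have := det_sgnMap ε
      rw [h] at this; norm_num at this
    have hpre : S ε = (sgnMap ε) ⁻¹' (S (fun _ => true)) := by
      ext x
      simp only [hS, Set.mem_inter_iff, Set.mem_setOf_eq, Set.mem_preimage, sgnMap_apply,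
        if_true]
      constructor
      · rintro ⟨h1, h2⟩
        refine ⟨fun i => ?_, ?_⟩
        · have := h1 i
          unfold sgn; split_ifs with h <;> simp [h] at this ⊢ <;> nlinarith [this]
        · calc ∑ i, |sgn ε i * x i| = ∑ i, |x i| := by
                refine Finset.sum_congr rfl fun i _ => ?_
                rw [abs_mul, abs_sgn, one_mul]
          _ < 1 := h2
      · rintro ⟨h1, h2⟩
        refine ⟨fun i => ?_, ?_⟩
        · have := h1 i
          unfold sgn at this; split_ifs at this with h <;> simp [h] <;> nlinarith [this]
        · calc ∑ i, |x i| = ∑ i, |sgn ε i * x i| := by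
                refine Finset.sum_congr rfl fun i _ => ?_
                rw [abs_mul, abs_sgn, one_mul]
          _ < 1 := h2
    rw [hpre, Measure.addHaar_preimage_linearMap volume hdet, abs_inv, det_sgnMap]
    simp
  have hN : volume {x : Fin n → ℝ | ∃ i, x i = 0} = 0 := by
    have : {x : Fin n → ℝ | ∃ i, x i = 0} = ⋃ i, {x : Fin n → ℝ | x i = 0} := by
      ext x; simp
    rw [this]
    refine measure_iUnion_null fun i => ?_
    have hker : {x : Fin n → ℝ | x i = 0}
        = (LinearMap.ker (LinearMap.proj i : (Fin n → ℝ) →ₗ[ℝ] ℝ) : Set (Fin n → ℝ)) := by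
      ext x; simp [LinearMap.mem_ker]
    rw [hker]
    refine Measure.addHaar_submodule volume _ fun htop => ?_
    have h1 : (fun _ => (1:ℝ)) ∈ LinearMap.ker (LinearMap.proj i : (Fin n → ℝ) →ₗ[ℝ] ℝ) := by
      rw [htop]; trivial
    simp [LinearMap.mem_ker] at h1
  have hBU : volume {x : Fin n → ℝ | ∑ i, |x i| < 1} = volume (⋃ ε, S ε) := by
    apply le_antisymm
    · calc volume {x : Fin n → ℝ | ∑ i, |x i| < 1}
          ≤ volume ((⋃ ε, S ε) ∪ {x : Fin n → ℝ | ∃ i, x i = 0}) := by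
            apply measure_mono
            intro x hx
            by_cases hz : ∃ i, x i = 0
            · exact Or.inr hz
            · push_neg at hz
              refine Or.inl (Set.mem_iUnion.mpr ⟨fun i => decide (0 < x i), fun i => ?_, hx⟩)
              by_cases h : 0 < x i
              · simp [h]
              · have hlt : x i < 0 := lt_of_le_of_ne (not_lt.mp h) (hz i)
                simp [h]
                exact hlt
      _ ≤ volume (⋃ ε, S ε) + volume {x : Fin n → ℝ | ∃ i, x i = 0} := measure_union_le _ _
      _ = volume (⋃ ε, S ε) := by rw [hN, add_zero]
    · exact measure_mono (Set.iUnion_subset fun ε => Set.inter_subset_right)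
  have hdisj : Pairwise (Function.onFun Disjoint S) := by
    intro ε ε' hne
    rw [Function.onFun, Set.disjoint_left]
    rintro x ⟨h1, _⟩ ⟨h2, _⟩
    apply hne
    funext i
    have a1 := h1 i; have a2 := h2 i
    by_cases b1 : ε i <;> by_cases b2 : ε' i <;> simp [b1, b2] at a1 a2 ⊢ <;> linarith
  have hsum : volume (⋃ ε, S ε) = 2 ^ n * volume (S (fun _ => true)) := by
    rw [measure_iUnion hdisj hSm, tsum_fintype]
    simp_rw [hveq]
    rw [Finset.sum_const, Finset.card_univ, Fintype.card_fun, Fintype.card_bool,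
      Fintype.card_fin, nsmul_eq_mul]
    norm_num
  have hB := aux_crosspoly n hn1
  have hv : volume (S (fun _ => true)) = ENNReal.ofReal ((n.factorial : ℝ)⁻¹) := by
    have h2n : ((2:ℝ≥0∞) ^ n) ≠ 0 := by positivity
    have h2t : ((2:ℝ≥0∞) ^ n) ≠ ⊤ := ENNReal.pow_ne_top (by norm_num)
    have key : (2:ℝ≥0∞) ^ n * volume (S (fun _ => true))
        = (2:ℝ≥0∞) ^ n * ENNReal.ofReal ((n.factorial : ℝ)⁻¹) := by
      rw [← hsum, ← hBU, hB]
      rw [div_eq_mul_inv, ENNReal.ofReal_mul (by positivity), ENNReal.ofReal_pow (by norm_num)]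
      norm_num
    exact (ENNReal.mul_right_inj h2n h2t).mp key
  have hsub1 : S (fun _ => true) ⊆ {x : Fin n → ℝ | (∀ i, 0 ≤ x i) ∧ ∑ i, x i ≤ 1} := by
    rintro x ⟨h1, h2⟩
    simp only [if_true] at h1
    refine ⟨fun i => (h1 i).le, ?_⟩
    have : ∑ i, x i = ∑ i, |x i| :=
      Finset.sum_congr rfl fun i _ => (abs_of_nonneg (h1 i).le).symm
    rw [this]; exact h2.le
  have hH : volume {x : Fin n → ℝ | ∑ i, x i = 1} = 0 := by
    set L : (Fin n → ℝ) →ₗ[ℝ] ℝ :=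
      { toFun := fun x => ∑ i, x i
        map_add' := fun x y => by simp [Finset.sum_add_distrib]
        map_smul' := fun c x => by simp [Finset.mul_sum] }
    have hker0 : volume ((LinearMap.ker L : Submodule ℝ (Fin n → ℝ)) : Set (Fin n → ℝ)) = 0 := by
      refine Measure.addHaar_submodule volume _ fun htop => ?_
      have h1 : (fun _ => (1:ℝ)) ∈ LinearMap.ker L := by rw [htop]; trivial
      simp only [LinearMap.mem_ker, L, LinearMap.coe_mk, AddHom.coe_mk] at h1
      rw [Finset.sum_const, Finset.card_univ, Fintype.card_fin, nsmul_eq_mul, mul_one] at h1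
      exact (show (n:ℝ) ≠ 0 by positivity) h1
    have hpre : {x : Fin n → ℝ | ∑ i, x i = 1}
        = (fun x : Fin n → ℝ => x + (fun _ => -(1 / (n:ℝ)))) ⁻¹'
            (LinearMap.ker L : Set (Fin n → ℝ)) := by
      ext x
      simp only [Set.mem_setOf_eq, Set.mem_preimage, SetLike.mem_coe, LinearMap.mem_ker, L,
        LinearMap.coe_mk, AddHom.coe_mk, Pi.add_apply, Finset.sum_add_distrib]
      have hn0 : (n:ℝ) ≠ 0 := by positivity
      rw [Finset.sum_const, Finset.card_univ, Fintype.card_fin, nsmul_eq_mul]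
      constructor
      · intro h; rw [h]; field_simp; norm_num
      · intro h
        have : ∑ i, x i = -(↑n * -(1 / ↑n)) := by linarith
        rw [this]; field_simp
    rw [hpre, measure_preimage_add_right volume _ _, hker0]
  apply le_antisymm
  · calc volume {x : Fin n → ℝ | (∀ i, 0 ≤ x i) ∧ ∑ i, x i ≤ 1}
        ≤ volume (S (fun _ => true) ∪ ({x : Fin n → ℝ | ∃ i, x i = 0}
            ∪ {x : Fin n → ℝ | ∑ i, x i = 1})) := by
          apply measure_mono
          rintro x ⟨h0, h1⟩
          by_cases hz : ∃ i, x i = 0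
          · exact Or.inr (Or.inl hz)
          · push_neg at hz
            have hpos : ∀ i, 0 < x i := fun i => lt_of_le_of_ne (h0 i) (Ne.symm (hz i))
            rcases eq_or_lt_of_le h1 with heq | hlt
            · exact Or.inr (Or.inr heq)
            · refine Or.inl ⟨fun i => by simp [hpos i], ?_⟩
              have : ∑ i, |x i| = ∑ i, x i :=
                Finset.sum_congr rfl fun i _ => abs_of_nonneg (hpos i).le
              rw [Set.mem_setOf_eq, this]; exact hlt
    _ ≤ volume (S (fun _ => true)) + volume ({x : Fin n → ℝ | ∃ i, x i = 0}
            ∪ {x : Fin n → ℝ | ∑ i, x i = 1}) := measure_union_le _ _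
    _ ≤ volume (S (fun _ => true)) + (volume {x : Fin n → ℝ | ∃ i, x i = 0}
            + volume {x : Fin n → ℝ | ∑ i, x i = 1}) := by
          gcongr; exact measure_union_le _ _
    _ = ENNReal.ofReal ((n.factorial : ℝ)⁻¹) := by rw [hN, hH, hv]; simp
  · rw [← hv]; exact measure_mono hsub1

/-- For the cube `K = [-1,1]ⁿ` with `n = 2^m`, there exist `n` pairwise orthogonal
vertices `f₁,…,f_n` lying in a common facet of `K` such that, with `C` the closed
convex cone they generate, `|K ∩ C| = n^{n/2}/n!`. -/
theorem cube_cone_volume (m n : ℕ) (hn : n = 2 ^ m) (hn1 : 1 ≤ n) :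
    letI K : Set (EuclideanSpace ℝ (Fin n)) := {x | ∀ i, |x i| ≤ 1}
    ∃ f : Fin n → EuclideanSpace ℝ (Fin n),
      (∀ i j, f i j = 1 ∨ f i j = -1) ∧
      (∃ j₀ : Fin n, ∀ i, f i j₀ = 1) ∧
      (∀ i i', i ≠ i' → ⟪f i, f i'⟫ = 0) ∧
      (volume (K ∩ {x | ∃ lam : Fin n → ℝ, (∀ i, 0 ≤ lam i) ∧ x = ∑ i, lam i • f i})).toReal
        = (n : ℝ) ^ ((n : ℝ) / 2) / (Nat.factorial n) := by
  classical
  have hcard : Fintype.card (Fin m → ZMod 2) = n := by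
    simp [hn, ZMod.card]
  let e : (Fin m → ZMod 2) ≃ Fin n := Fintype.equivFinOfCardEq hcard
  let f : Fin n → EuclideanSpace ℝ (Fin n) :=
    fun i => WithLp.toLp 2 (fun j => chi (e.symm i) (e.symm j))
  have hfapp : ∀ i j, f i j = chi (e.symm i) (e.symm j) := fun i j => rfl
  have hpm : ∀ i j, f i j = 1 ∨ f i j = -1 := fun i j => chi_pm _ _
  have hcol : ∀ i, f i (e 0) = 1 := by
    intro i; rw [hfapp, Equiv.symm_apply_apply]; exact chi_zero_right _
  have hsq : ∀ (a b : ℝ), (a = 1 ∨ a = -1) → a * a = 1 := by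
    rintro a b (rfl | rfl) <;> norm_num
  have hortho : ∀ i i', i ≠ i' → ∑ j, f i j * f i' j = 0 := by
    intro i i' hne
    have hab : e.symm i + e.symm i' ≠ 0 := by
      intro h
      apply hne
      have hneg : ∀ x : ZMod 2, -x = x := by decide
      have h2 : e.symm i = e.symm i' := by
        have := add_eq_zero_iff_eq_neg.mp h
        funext k
        rw [congrFun this k]
        exact hneg _
      have := congrArg e h2
      simpa [Equiv.apply_symm_apply] using this
    calc ∑ j, f i j * f i' j
        = ∑ g : Fin m → ZMod 2, chi (e.symm i) g * chi (e.symm i') g := by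
          rw [← Equiv.sum_comp e.symm
            (fun g => chi (e.symm i) g * chi (e.symm i') g)]
      _ = ∑ g : Fin m → ZMod 2, chi (e.symm i + e.symm i') g :=
          Finset.sum_congr rfl fun g _ => chi_mul _ _ _
      _ = 0 := sum_chi_eq_zero hab
  have hinner : ∀ i i', ⟪f i, f i'⟫ = ∑ j, f i j * f i' j := by
    intro i i'
    simp [PiLp.inner_apply, RCLike.inner_apply, mul_comm]
  -- the linear map
  let T : EuclideanSpace ℝ (Fin n) →ₗ[ℝ] EuclideanSpace ℝ (Fin n) :=
    { toFun := fun y => ∑ i, y i • f i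
      map_add' := fun y z => by
        show ∑ i, (y i + z i) • f i = _
        simp only [add_smul]
        rw [Finset.sum_add_distrib]
      map_smul' := fun c y => by
        show ∑ i, (c * y i) • f i = _
        simp only [mul_smul]
        rw [← Finset.smul_sum]
        rfl }
  have hTapp : ∀ y : EuclideanSpace ℝ (Fin n), T y = ∑ i, y i • f i := fun _ => rfl
  have hsum_apply : ∀ (g : Fin n → EuclideanSpace ℝ (Fin n)) (j : Fin n),
      (∑ i, g i) j = ∑ i, g i j := fun g j => by rw [WithLp.ofLp_sum, Finset.sum_apply]
  have hTapp' : ∀ (y : EuclideanSpace ℝ (Fin n)) (j : Fin n),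
      T y j = ∑ i, y i * f i j := by
    intro y j
    rw [hTapp, hsum_apply]
    rfl
  -- the simplex
  set Δ : Set (EuclideanSpace ℝ (Fin n)) := {y | (∀ i, 0 ≤ y i) ∧ ∑ i, y i ≤ 1} with hΔ
  have hset : {x : EuclideanSpace ℝ (Fin n) | ∀ i, |x i| ≤ 1} ∩ {x | ∃ lam : Fin n → ℝ, (∀ i, 0 ≤ lam i) ∧ x = ∑ i, lam i • f i}
      = T '' Δ := by
    ext x
    constructor
    · rintro ⟨hK, lam, hlam0, hx⟩
      have hy : T (WithLp.toLp 2 lam) = x := by rw [hTapp]; exact hx.symm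
      refine ⟨WithLp.toLp 2 lam, ⟨hlam0, ?_⟩, hy⟩
      have hx0 : x (e 0) = ∑ i, lam i := by
        rw [← hy, hTapp']
        exact Finset.sum_congr rfl fun i _ => by rw [hcol i, mul_one]
      calc ∑ i, lam i = x (e 0) := hx0.symm
        _ ≤ |x (e 0)| := le_abs_self _
        _ ≤ 1 := hK (e 0)
    · rintro ⟨y, ⟨hy0, hy1⟩, rfl⟩
      refine ⟨fun j => ?_, fun i => y i, hy0, (hTapp y)⟩
      rw [hTapp' y j]
      calc |∑ i, y i * f i j| ≤ ∑ i, |y i * f i j| := Finset.abs_sum_le_sum_abs _ _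
        _ = ∑ i, y i := by
            refine Finset.sum_congr rfl fun i _ => ?_
            rw [abs_mul, abs_of_nonneg (hy0 i)]
            rcases hpm i j with h | h <;> rw [h] <;> norm_num
        _ ≤ 1 := hy1
  -- determinant
  let b := PiLp.basisFun 2 ℝ (Fin n)
  have hM : LinearMap.toMatrix b b T = Matrix.of (fun i j => f j i) := by
    ext i j
    rw [LinearMap.toMatrix_apply, PiLp.basisFun_repr]
    show T (b j) i = f j i
    rw [hTapp']
    have hbj : ∀ k, (b j) k = if k = j then (1:ℝ) else 0 := by
      intro k
      show (PiLp.basisFun 2 ℝ (Fin n) j) k = _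
      rw [PiLp.basisFun_apply]
      simp [Pi.single_apply]
    rw [Finset.sum_eq_single j]
    · rw [hbj j, if_pos rfl, one_mul]
    · intro k _ hk; rw [hbj k, if_neg hk, zero_mul]
    · intro h; exact absurd (Finset.mem_univ j) h
  have hdet2 : (LinearMap.det T) ^ 2 = ((n:ℝ)) ^ n := by
    rw [← LinearMap.det_toMatrix b, hM]
    have hMM : Matrix.transpose (Matrix.of fun i j => f j i) * (Matrix.of fun i j => f j i)
        = (n:ℝ) • (1 : Matrix (Fin n) (Fin n) ℝ) := by
      ext i k
      rw [Matrix.mul_apply]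
      simp only [Matrix.transpose_apply, Matrix.of_apply, Matrix.smul_apply, Matrix.one_apply,
        smul_eq_mul]
      by_cases h : i = k
      · subst h
        rw [if_pos rfl, mul_one]
        rw [Finset.sum_congr rfl fun j _ => hsq (f i j) (f i j) (hpm i j)]
        simp
      · rw [if_neg h, mul_zero]
        exact hortho i k h
    have hd := congrArg Matrix.det hMM
    rw [Matrix.det_mul, Matrix.det_transpose, Matrix.det_smul, Matrix.det_one,
      Fintype.card_fin, mul_one] at hd
    rw [sq, hd]
  have habs : |LinearMap.det T| = (n : ℝ) ^ ((n : ℝ) / 2) := by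
    rw [← Real.sqrt_sq_eq_abs, hdet2, Real.sqrt_eq_rpow, ← Real.rpow_natCast (n:ℝ) n,
      ← Real.rpow_mul (by positivity)]
    congr 1
    ring
  -- volume of the simplex in EuclideanSpace
  have hmeas : MeasurableSet {x : Fin n → ℝ | (∀ i, 0 ≤ x i) ∧ ∑ i, x i ≤ 1} := by
    have : {x : Fin n → ℝ | (∀ i, 0 ≤ x i) ∧ ∑ i, x i ≤ 1}
        = (⋂ i, {x : Fin n → ℝ | 0 ≤ x i}) ∩ {x : Fin n → ℝ | ∑ i, x i ≤ 1} := by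
      ext x; simp [Set.mem_iInter]
    rw [this]
    exact (MeasurableSet.iInter fun i =>
        measurableSet_le measurable_const (measurable_pi_apply i)).inter
      (measurableSet_le (by fun_prop) measurable_const)
  have hΔvol : volume Δ = ENNReal.ofReal ((n.factorial : ℝ)⁻¹) := by
    have hp := (EuclideanSpace.volume_preserving_symm_measurableEquiv_toLp (Fin n)).measure_preimage
      (s := {x : Fin n → ℝ | (∀ i, 0 ≤ x i) ∧ ∑ i, x i ≤ 1}) hmeas.nullMeasurableSet
    have hpre : (MeasurableEquiv.toLp 2 (Fin n → ℝ)).symm ⁻¹'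
        {x : Fin n → ℝ | (∀ i, 0 ≤ x i) ∧ ∑ i, x i ≤ 1} = Δ := rfl
    rw [hpre] at hp
    rw [hp, volume_simplex n hn1]
  refine ⟨f, hpm, ⟨e 0, hcol⟩, fun i i' hne => by rw [hinner]; exact hortho i i' hne, ?_⟩
  rw [hset, Measure.addHaar_image_linearMap, hΔvol, habs,
    ← ENNReal.ofReal_mul (by positivity), ENNReal.toReal_ofReal (by positivity)]
  exact (div_eq_mul_inv _ _).symm
end
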